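/- Let E be a finite-dimensional real inner product space, let S : E → E be a symmetric positive-definite linear map, let g ∈ E, and let L > 0. Then the infimum over v ∈ E of ⟨g, v⟩ + (1/2)·⟨S v, v⟩ + (L/4)·‖v‖⁴ equals the supremum over τ ≥ 0 of −(1/2)·⟨(S + τ·√(2L)·I)^{−1} g, g⟩ − (1/2)·τ², where I is the identity map (for τ ≥ 0 the map S + τ·√(2L)·I is positive definite, hence invertible). -/

import Mathlib

set_option maxHeartbeats 800000

open scoped RealInnerProductSpace

section Aux
variable {E : Type*} [NormedAddCommGroup E] [InnerProductSpace ℝ E] [FiniteDimensional ℝ E]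

private lemma bij_of_posdef (A : E →ₗ[ℝ] E) (hA : ∀ x : E, x ≠ 0 → 0 < ⟪A x, x⟫) :
    Function.Bijective ⇑A := by
  have hinj : Function.Injective ⇑A := by
    rw [← LinearMap.ker_eq_bot, LinearMap.ker_eq_bot']
    intro x hx
    by_contra hx0
    have := hA x hx0
    rw [hx] at this
    simp at this
  exact ⟨hinj, LinearMap.injective_iff_surjective.mp hinj⟩

private lemma quad_lower (A : E →ₗ[ℝ] E) (hAs : ∀ x y : E, ⟪A x, y⟫ = ⟪x, A y⟫)
    (hA0 : ∀ x : E, 0 ≤ ⟪A x, x⟫) (g u : E) (hu : A u = g) (v : E) :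
    -(1 / 2) * ⟪u, g⟫ ≤ ⟪g, v⟫ + (1 / 2) * ⟪A v, v⟫ := by
  have h1 : ⟪A (v + u), v + u⟫ = ⟪A v, v⟫ + ⟪A v, u⟫ + ⟪A u, v⟫ + ⟪A u, u⟫ := by
    simp only [map_add, inner_add_left, inner_add_right]; ring
  have h2 : ⟪A v, u⟫ = ⟪g, v⟫ := by rw [hAs, hu, real_inner_comm]
  have h3 : ⟪A u, v⟫ = ⟪g, v⟫ := by rw [hu]
  have h4 : ⟪A u, u⟫ = ⟪g, u⟫ := by rw [hu]
  have h6 : ⟪u, g⟫ = ⟪g, u⟫ := real_inner_comm _ _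
  have h7 := hA0 (v + u)
  rw [h1, h2, h3, h4] at h7
  linarith

end Aux

open scoped RealInnerProductSpace in
theorem quartic_min_max_duality {E : Type*} [NormedAddCommGroup E] [InnerProductSpace ℝ E]
    [FiniteDimensional ℝ E]
    (S : E →ₗ[ℝ] E)
    (hsymm : ∀ x y : E, ⟪S x, y⟫ = ⟪x, S y⟫)
    (hpos : ∀ x : E, x ≠ 0 → 0 < ⟪S x, x⟫)
    (g : E) (L : ℝ) (hL : 0 < L) :
    (⨅ v : E, ⟪g, v⟫ + (1 / 2) * ⟪S v, v⟫ + (L / 4) * ‖v‖ ^ 4) =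
      ⨆ τ : Set.Ici (0 : ℝ),
        (-(1 / 2) * ⟪Function.invFun
            (⇑(S + ((τ : ℝ) * Real.sqrt (2 * L)) • (LinearMap.id : E →ₗ[ℝ] E))) g, g⟫
          - (1 / 2) * (τ : ℝ) ^ 2) := by
  haveI : Nonempty (Set.Ici (0 : ℝ)) := ⟨⟨0, Set.self_mem_Ici⟩⟩
  set s : ℝ := Real.sqrt (2 * L) with hs
  have hs2 : s ^ 2 = 2 * L := Real.sq_sqrt (by linarith)
  have hs0 : 0 ≤ s := Real.sqrt_nonneg _
  set f : E → ℝ := fun v => ⟪g, v⟫ + (1 / 2) * ⟪S v, v⟫ + (L / 4) * ‖v‖ ^ 4 with hf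
  set D : Set.Ici (0 : ℝ) → ℝ := fun τ =>
    -(1 / 2) * ⟪Function.invFun
        (⇑(S + ((τ : ℝ) * s) • (LinearMap.id : E →ₗ[ℝ] E))) g, g⟫
      - (1 / 2) * (τ : ℝ) ^ 2 with hD
  -- nonnegativity of S
  have hSnn : ∀ x : E, 0 ≤ ⟪S x, x⟫ := by
    intro x
    rcases eq_or_ne x 0 with rfl | hx
    · simp
    · exact (hpos x hx).le
  -- shifted operators
  have hAapp : ∀ (c : ℝ) (x : E),
      (S + c • (LinearMap.id : E →ₗ[ℝ] E)) x = S x + c • x := by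
    intro c x; simp
  have hAinner : ∀ (c : ℝ) (x y : E),
      ⟪(S + c • (LinearMap.id : E →ₗ[ℝ] E)) x, y⟫ = ⟪S x, y⟫ + c * ⟪x, y⟫ := by
    intro c x y; rw [hAapp, inner_add_left, real_inner_smul_left]
  have hAsymm : ∀ (c : ℝ) (x y : E),
      ⟪(S + c • (LinearMap.id : E →ₗ[ℝ] E)) x, y⟫
        = ⟪x, (S + c • (LinearMap.id : E →ₗ[ℝ] E)) y⟫ := by
    intro c x y
    rw [hAinner, hAapp, inner_add_right, real_inner_smul_right, hsymm]
  have hApos : ∀ c : ℝ, 0 ≤ c → ∀ x : E, x ≠ 0 →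
      0 < ⟪(S + c • (LinearMap.id : E →ₗ[ℝ] E)) x, x⟫ := by
    intro c hc x hx
    rw [hAinner, real_inner_self_eq_norm_sq]
    have h1 := hpos x hx
    nlinarith [mul_nonneg hc (sq_nonneg ‖x‖)]
  have hAnn : ∀ c : ℝ, 0 ≤ c → ∀ x : E,
      0 ≤ ⟪(S + c • (LinearMap.id : E →ₗ[ℝ] E)) x, x⟫ := by
    intro c hc x
    rcases eq_or_ne x 0 with rfl | hx
    · simp
    · exact (hApos c hc x hx).le
  -- continuity
  have hScont : Continuous fun v : E => S v := S.continuous_of_finiteDimensional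
  have hcont : Continuous f := by
    apply Continuous.add
    · exact (continuous_const.inner continuous_id).add
        (continuous_const.mul (hScont.inner continuous_id))
    · exact continuous_const.mul (continuous_norm.pow 4)
  -- coercivity
  have hφ : Filter.Tendsto (fun r : ℝ => (L / 4) * r ^ 4 - ‖g‖ * r)
      Filter.atTop Filter.atTop := by
    have h1 : Filter.Tendsto (fun r : ℝ => r * ((L / 4) * r ^ 3 + -‖g‖))
        Filter.atTop Filter.atTop :=
      Filter.Tendsto.atTop_mul_atTop₀ Filter.tendsto_id
        (Filter.tendsto_atTop_add_const_right _ _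
          ((Filter.tendsto_pow_atTop (by norm_num : (3:ℕ) ≠ 0)).const_mul_atTop (by linarith)))
    exact h1.congr fun r => by ring
  have hcoer : Filter.Tendsto f (Filter.cocompact E) Filter.atTop := by
    refine Filter.tendsto_atTop_mono ?_ (hφ.comp tendsto_norm_cocompact_atTop)
    intro v
    have h1 : -(‖g‖ * ‖v‖) ≤ ⟪g, v⟫ :=
      neg_le_of_abs_le (abs_real_inner_le_norm g v)
    have h2 := hSnn v
    simp only [Function.comp_apply, hf]
    nlinarith [norm_nonneg v]
  obtain ⟨v₀, hv₀⟩ : ∃ x : E, ∀ y : E, f x ≤ f y := hcont.exists_forall_le hcoer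
  -- stationarity at the minimizer
  have hstat : g + S v₀ + (L * ‖v₀‖ ^ 2) • v₀ = 0 := by
    have key : ∀ w : E, ⟪g + S v₀ + (L * ‖v₀‖ ^ 2) • v₀, w⟫ = 0 := by
      intro w
      set b : ℝ := ⟪g, w⟫ + ⟪S v₀, w⟫ + L * ‖v₀‖ ^ 2 * ⟪v₀, w⟫ with hb
      set c2 : ℝ := (1 / 2) * ⟪S w, w⟫ + (L / 4) * (4 * ⟪v₀, w⟫ ^ 2 + 2 * ‖v₀‖ ^ 2 * ‖w‖ ^ 2)
        with hc2
      set c3 : ℝ := (L / 4) * (4 * ⟪v₀, w⟫ * ‖w‖ ^ 2) with hc3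
      set c4 : ℝ := (L / 4) * ‖w‖ ^ 4 with hc4
      have hsw : ⟪S w, v₀⟫ = ⟪S v₀, w⟫ := by rw [hsymm w v₀, real_inner_comm]
      have hq : (fun t : ℝ => f (v₀ + t • w)) =
          fun t : ℝ => f v₀ + b * t + c2 * t ^ 2 + c3 * t ^ 3 + c4 * t ^ 4 := by
        funext t
        have e1 : ⟪g, v₀ + t • w⟫ = ⟪g, v₀⟫ + t * ⟪g, w⟫ := by
          rw [inner_add_right, real_inner_smul_right]
        have e2 : ⟪S (v₀ + t • w), v₀ + t • w⟫
            = ⟪S v₀, v₀⟫ + 2 * t * ⟪S v₀, w⟫ + t ^ 2 * ⟪S w, w⟫ := by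
          simp only [map_add, map_smul, inner_add_left, inner_add_right,
            real_inner_smul_left, real_inner_smul_right, hsw]
          ring
        have e3 : ‖v₀ + t • w‖ ^ 2 = ‖v₀‖ ^ 2 + 2 * t * ⟪v₀, w⟫ + t ^ 2 * ‖w‖ ^ 2 := by
          rw [norm_add_sq_real, real_inner_smul_right, norm_smul]
          simp only [Real.norm_eq_abs, mul_pow, sq_abs]
          ring
        have e4 : ‖v₀ + t • w‖ ^ 4 = (‖v₀ + t • w‖ ^ 2) ^ 2 := by ring
        simp only [hf, e1, e2, e4, e3, hb, hc2, hc3, hc4]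
        ring
      have hpoly : HasDerivAt
          (fun t : ℝ => f v₀ + b * t ^ 1 + c2 * t ^ 2 + c3 * t ^ 3 + c4 * t ^ 4) b 0 := by
        have h1 := (hasDerivAt_pow 1 (0 : ℝ)).const_mul b
        have h2 := (hasDerivAt_pow 2 (0 : ℝ)).const_mul c2
        have h3 := (hasDerivAt_pow 3 (0 : ℝ)).const_mul c3
        have h4 := (hasDerivAt_pow 4 (0 : ℝ)).const_mul c4
        have h0 := ((((hasDerivAt_const (0 : ℝ) (f v₀)).add h1).add h2).add h3).add h4
        simp at h0
        have heq : (fun t : ℝ => f v₀ + b * t ^ 1 + c2 * t ^ 2 + c3 * t ^ 3 + c4 * t ^ 4) =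
            ((((fun _ : ℝ => f v₀) + fun y : ℝ => b * y) + fun y : ℝ => c2 * y ^ 2) +
              fun y : ℝ => c3 * y ^ 3) + fun y : ℝ => c4 * y ^ 4 := by
          funext t
          simp only [Pi.add_apply, pow_one]
        rw [heq]
        exact h0
      have hd : HasDerivAt (fun t : ℝ => f (v₀ + t • w)) b 0 := by
        rw [hq]
        simpa [pow_one] using hpoly
      have hmin : IsLocalMin (fun t : ℝ => f (v₀ + t • w)) 0 :=
        Filter.Eventually.of_forall fun t => by
          simpa using hv₀ (v₀ + t • w)
      have hb0 : b = 0 := hmin.hasDerivAt_eq_zero hd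
      rw [inner_add_left, inner_add_left, real_inner_smul_left]
      rw [hb] at hb0
      linarith
    have := key (g + S v₀ + (L * ‖v₀‖ ^ 2) • v₀)
    exact inner_self_eq_zero.mp this
  -- weak duality: every dual value is ≤ f v₀
  have hDle : ∀ τ : Set.Ici (0 : ℝ), D τ ≤ f v₀ := by
    rintro ⟨τ, hτ⟩
    have hτ0 : (0 : ℝ) ≤ τ := hτ
    set c : ℝ := τ * s with hc
    have hc0 : 0 ≤ c := mul_nonneg hτ0 hs0
    set A : E →ₗ[ℝ] E := S + c • (LinearMap.id : E →ₗ[ℝ] E) with hA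
    set u : E := Function.invFun (⇑A) g with hu
    have hAu : A u = g :=
      Function.rightInverse_invFun (bij_of_posdef A (hApos c hc0)).2 g
    have hql := quad_lower A (hAsymm c) (hAnn c hc0) g u hAu v₀
    have hAv : ⟪A v₀, v₀⟫ = ⟪S v₀, v₀⟫ + c * ‖v₀‖ ^ 2 := by
      rw [hA, hAinner, real_inner_self_eq_norm_sq]
    rw [hAv] at hql
    have hgu : ⟪u, g⟫ = ⟪g, u⟫ := real_inner_comm _ _
    have hsv : s ^ 2 * ‖v₀‖ ^ 4 = 2 * L * ‖v₀‖ ^ 4 := by rw [hs2]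
    have key : τ * s * ‖v₀‖ ^ 2 / 2 - (1 / 2) * τ ^ 2 ≤ (L / 4) * ‖v₀‖ ^ 4 := by
      nlinarith [sq_nonneg (τ - s * ‖v₀‖ ^ 2 / 2), hsv]
    rw [hc] at hql
    simp only [hD, hf]
    have hinv : Function.invFun (⇑(S + ((τ : ℝ) * s) • (LinearMap.id : E →ₗ[ℝ] E))) g = u := by
      rw [hu, hA, hc]
    rw [hinv]
    linarith
  -- the optimal dual point
  set τ₀ : ℝ := s * ‖v₀‖ ^ 2 / 2 with hτ₀def
  have hτ₀0 : 0 ≤ τ₀ := by positivity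
  have hc₀ : τ₀ * s = L * ‖v₀‖ ^ 2 := by
    rw [hτ₀def]; nlinarith [hs2]
  have hDeq : D ⟨τ₀, hτ₀0⟩ = f v₀ := by
    have hbij := bij_of_posdef (S + (τ₀ * s) • (LinearMap.id : E →ₗ[ℝ] E))
      (hApos (τ₀ * s) (mul_nonneg hτ₀0 hs0))
    have hAneg : (S + (τ₀ * s) • (LinearMap.id : E →ₗ[ℝ] E)) (-v₀) = g := by
      rw [hAapp, hc₀]
      have : S (-v₀) + (L * ‖v₀‖ ^ 2) • (-v₀) = -(S v₀ + (L * ‖v₀‖ ^ 2) • v₀) := by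
        simp [smul_neg]; abel
      rw [this]
      have : S v₀ + (L * ‖v₀‖ ^ 2) • v₀ = -g := by
        have := hstat; rw [add_assoc] at this
        linear_combination (norm := abel) this
      rw [this, neg_neg]
    have hu : Function.invFun (⇑(S + (τ₀ * s) • (LinearMap.id : E →ₗ[ℝ] E))) g = -v₀ := by
      apply hbij.1
      rw [Function.rightInverse_invFun hbij.2 g, hAneg]
    have hip : ⟪g, v₀⟫ + ⟪S v₀, v₀⟫ + L * ‖v₀‖ ^ 2 * ‖v₀‖ ^ 2 = 0 := by
      have h := congrArg (fun x => ⟪x, v₀⟫) hstat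
      simpa [inner_add_left, real_inner_smul_left, real_inner_self_eq_norm_sq] using h
    have hτsq : τ₀ ^ 2 = L * ‖v₀‖ ^ 4 / 2 := by
      rw [hτ₀def]; nlinarith [hs2]
    have hvg : ⟪-v₀, g⟫ = -⟪g, v₀⟫ := by
      rw [inner_neg_left, real_inner_comm]
    show -(1 / 2) * ⟪Function.invFun
        (⇑(S + (τ₀ * s) • (LinearMap.id : E →ₗ[ℝ] E))) g, g⟫
        - (1 / 2) * τ₀ ^ 2 = f v₀
    rw [hu, hvg, hτsq, hf]
    nlinarith [hip]
  -- conclude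
  have hInf : (⨅ v : E, f v) = f v₀ :=
    le_antisymm (ciInf_le ⟨f v₀, by rintro x ⟨v, rfl⟩; exact hv₀ v⟩ v₀) (le_ciInf hv₀)
  have hbdd : BddAbove (Set.range D) := ⟨f v₀, by rintro x ⟨τ, rfl⟩; exact hDle τ⟩
  have hSup : (⨆ τ : Set.Ici (0 : ℝ), D τ) = f v₀ :=
    le_antisymm (ciSup_le hDle) (le_ciSup_of_le hbdd ⟨τ₀, hτ₀0⟩ hDeq.ge)
  rw [hInf, hSup]
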